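/- arXiv:1904.05848 — 2 statements merged into one kernel-verified Lean document; each statement's English description precedes it below -/
import Mathlib

section
/- Assume Φ satisfies ESC (constants α̲ ≤ ᾱ), UCC (constant θ), NEQ (constant ε, with centers x^{(n)} ∈ J_n ∩ X_ε), BDP (constant K, with its ball-inclusion consequence φ_ω^n(B(x,r)) ⊇ B(φ_ω^n(x), K^{-1}‖Dφ_ω^n‖r) for balls B(x,r) ⊆ X), and diam(X) ≤ 1, and let μ_h be an h-Ahlfors measure with constant C and supp(μ_h) = J. Then there exists N ∈ ℕ such that: for all n and all m ≥ max(N, θ^{-1}[log 2 + n(ᾱ + θ)]), and every ω ∈ I^n with e^{-S_nβ(ωξ^{(n)})} ≤ 2, the number of τ ∈ I^m with B_τ ⊆ B_ω is at least C^{-2}·(e^{-S_nβ(ωξ^{(n)})}/(2κ̄_m))^h. -/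
open Set Metric MeasureTheory Filter

noncomputable section

/-- Points of Euclidean space `ℝ^d`. -/
abbrev Pt (d : ℕ) : Type := EuclideanSpace ℝ (Fin d)

/-- A nonautonomous conformal iterated function system on a compact convex set
`X ⊆ ℝ^d` with nonempty interior, contained in a bounded open connected set `V`.
`I n` is the (finite, nonempty) alphabet at level `n` (0-indexed version of `I^{(n+1)}`),
`φ n e` the corresponding injective conformal contraction, whose derivative at every
point of `V` is a similarity with (positive) scaling factor `D n e x`. -/
structure NCIFS (d : ℕ) (E : Type) [DecidableEq E] : Type where
  X : Set (Pt d)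
  V : Set (Pt d)
  compactX : IsCompact X
  convexX : Convex ℝ X
  intX : (interior X).Nonempty
  XsubV : X ⊆ V
  openV : IsOpen V
  bddV : Bornology.IsBounded V
  connV : IsConnected V
  I : ℕ → Finset E
  Ine : ∀ n, (I n).Nonempty
  φ : ℕ → E → Pt d → Pt d
  D : ℕ → E → Pt d → ℝ
  Dpos : ∀ n e, e ∈ I n → ∀ x ∈ V, 0 < D n e x
  mapsV : ∀ n e, e ∈ I n → Set.MapsTo (φ n e) V V
  mapsX : ∀ n e, e ∈ I n → Set.MapsTo (φ n e) X X
  injV : ∀ n e, e ∈ I n → Set.InjOn (φ n e) V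
  conformal : ∀ n e, e ∈ I n → ∀ x ∈ V,
    ∃ A : Pt d →L[ℝ] Pt d, HasFDerivAt (φ n e) A x ∧ ∀ v, ‖A v‖ = D n e x * ‖v‖
  contractX : ∀ n e, e ∈ I n → ∀ x ∈ X, D n e x < 1

/-- Extension of a finite word to an infinite sequence (values beyond the word
are an arbitrary fixed element; they are never used). -/
def wext {E : Type} [Nonempty E] {q : ℕ} (ω : Fin q → E) : ℕ → E :=
  fun j => if h : j < q then ω ⟨j, h⟩ else Classical.arbitrary E

/-- Concatenation `ωξ` of a finite word `ω` of length `n` with an infinite tail `ξ`. -/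
def wcat {E : Type} {n : ℕ} (ω : Fin n → E) (ξ : ℕ → E) : ℕ → E :=
  fun j => if h : j < n then ω ⟨j, h⟩ else ξ (j - n)

namespace NCIFS

variable {d : ℕ} {E : Type} [DecidableEq E]

/-- The finite words occupying levels `m, m+1, …, m+q-1`. -/
def words (S : NCIFS d E) (m q : ℕ) : Finset (Fin q → E) :=
  Fintype.piFinset fun k => S.I (m + (k : ℕ))

/-- The composition `φ_{ξ 0}^{(m)} ∘ φ_{ξ 1}^{(m+1)} ∘ ⋯ ∘ φ_{ξ (q-1)}^{(m+q-1)}`. -/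
def comp (S : NCIFS d E) : ℕ → ℕ → (ℕ → E) → Pt d → Pt d
  | _, 0, _ => id
  | m, q + 1, ξ => S.φ m (ξ 0) ∘ S.comp (m + 1) q (fun j => ξ (j + 1))

/-- The scaling factor `|Dφ_ξ^{(m,…,m+q-1)}(x)|` of the composition, via the chain rule. -/
def Dw (S : NCIFS d E) : ℕ → ℕ → (ℕ → E) → Pt d → ℝ
  | _, 0, _, _ => 1
  | m, q + 1, ξ, x =>
      S.D m (ξ 0) (S.comp (m + 1) q (fun j => ξ (j + 1)) x) *
        S.Dw (m + 1) q (fun j => ξ (j + 1)) x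

/-- `‖Dφ_ξ‖ = sup_{x ∈ X} |Dφ_ξ(x)|`. -/
def normDw (S : NCIFS d E) (m q : ℕ) (ξ : ℕ → E) : ℝ :=
  sSup {r | ∃ x ∈ S.X, r = S.Dw m q ξ x}

/-- `κ̲_{(n)}`: minimum over `j ∈ I^{(n)}` and `x ∈ X` of `|Dφ_j^{(n)}(x)|`. -/
def kminLv (S : NCIFS d E) (n : ℕ) : ℝ :=
  sInf {r | ∃ e ∈ S.I n, ∃ x ∈ S.X, r = S.D n e x}

/-- `κ̄_{(n)}`: maximum over `j ∈ I^{(n)}` and `x ∈ X` of `|Dφ_j^{(n)}(x)|`. -/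
def kmaxLv (S : NCIFS d E) (n : ℕ) : ℝ :=
  sSup {r | ∃ e ∈ S.I n, ∃ x ∈ S.X, r = S.D n e x}

/-- `κ̲_n`: minimum over words `ω ∈ I^n` and `x ∈ X` of `|Dφ_ω^n(x)|`. -/
def kmin [Nonempty E] (S : NCIFS d E) (n : ℕ) : ℝ :=
  sInf {r | ∃ ω ∈ S.words 0 n, ∃ x ∈ S.X, r = S.Dw 0 n (wext ω) x}

/-- `κ̄_n`: maximum over words `ω ∈ I^n` and `x ∈ X` of `|Dφ_ω^n(x)|`. -/
def kmax [Nonempty E] (S : NCIFS d E) (n : ℕ) : ℝ :=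
  sSup {r | ∃ ω ∈ S.words 0 n, ∃ x ∈ S.X, r = S.Dw 0 n (wext ω) x}

/-- The partition function `Z_n(t) = Σ_{ω ∈ I^n} ‖Dφ_ω^n‖^t`. -/
def Z [Nonempty E] (S : NCIFS d E) (n : ℕ) (t : ℝ) : ℝ :=
  ∑ ω ∈ S.words 0 n, (S.normDw 0 n (wext ω)) ^ t

/-- `‖Dφ_e^{(n)}‖`. -/
def normLv (S : NCIFS d E) (n : ℕ) (e : E) : ℝ :=
  sSup {r | ∃ x ∈ S.X, r = S.D n e x}

/-- `ρ_n = max_{a,b ∈ I^{(n)}} ‖Dφ_a^{(n)}‖ / ‖Dφ_b^{(n)}‖`. -/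
def ρ (S : NCIFS d E) (n : ℕ) : ℝ :=
  sSup {r | ∃ a ∈ S.I n, ∃ b ∈ S.I n, r = S.normLv n a / S.normLv n b}

/-- `min_{a ∈ I^{(n)}} ‖Dφ_a^{(n)}‖`. -/
def minNormLv (S : NCIFS d E) (n : ℕ) : ℝ :=
  sInf {r | ∃ e ∈ S.I n, r = S.normLv n e}

/-- The limit set `J = ⋂_{n ≥ 1} ⋃_{ω ∈ I^n} φ_ω^n(X)`. -/
def limitSet [Nonempty E] (S : NCIFS d E) : Set (Pt d) :=
  ⋂ n ∈ Set.Ici 1, ⋃ ω ∈ S.words 0 n, S.comp 0 n (wext ω) '' S.X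

/-- `J_n = π_n(I^{(n+1,∞)})`: points lying in the nested intersection
`⋂_k φ_ξ^{(n,…,n+k-1)}(X)` for some admissible tail `ξ`. -/
def Jlv (S : NCIFS d E) (n : ℕ) : Set (Pt d) :=
  {x | ∃ ξ : ℕ → E, (∀ j, ξ j ∈ S.I (n + j)) ∧ ∀ k, x ∈ S.comp n k ξ '' S.X}

/-- `X_ε = X \ B(ℝ^d \ X, ε)`. -/
def Xeps (S : NCIFS d E) (ε : ℝ) : Set (Pt d) :=
  S.X \ ⋃ y ∈ S.Xᶜ, Metric.ball y ε

/-- Open set condition. -/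
def OSC (S : NCIFS d E) : Prop :=
  ∀ n, ∀ i ∈ S.I n, ∀ j ∈ S.I n, i ≠ j →
    S.φ n i '' interior S.X ∩ S.φ n j '' interior S.X = ∅

/-- Uniformly contracting condition with constant `θ`. -/
def UCC (S : NCIFS d E) (θ : ℝ) : Prop :=
  0 < θ ∧ ∀ n, S.kmaxLv n ≤ Real.exp (-θ)

/-- Bounded distortion property with constant `K`. -/
def BDP [Nonempty E] (S : NCIFS d E) (K : ℝ) : Prop :=
  1 ≤ K ∧ ∀ n, ∀ ω ∈ S.words 0 n, ∀ x ∈ S.X, ∀ y ∈ S.X,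
    S.Dw 0 n (wext ω) x ≤ K * S.Dw 0 n (wext ω) y

/-- Non-empty quasi middle condition with constant `ε`. -/
def NEQ (S : NCIFS d E) (ε : ℝ) : Prop :=
  0 < ε ∧ ∀ n, (S.Jlv n ∩ S.Xeps ε).Nonempty

end NCIFS

/-- The (topological) support of a measure: points all of whose balls have positive measure. -/
def msupp {d : ℕ} (μ : Measure (Pt d)) : Set (Pt d) :=
  {x | ∀ r : ℝ, 0 < r → 0 < μ (Metric.ball x r)}

/-- `μ` is `h`-Ahlfors regular with constant `C`. -/
def Ahlfors {d : ℕ} (μ : Measure (Pt d)) (h C : ℝ) : Prop :=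
  1 ≤ C ∧ ∀ x ∈ msupp μ, ∀ r : ℝ, 0 < r → r ≤ 1 →
    ENNReal.ofReal (C⁻¹ * r ^ h) ≤ μ (Metric.ball x r) ∧
      μ (Metric.ball x r) ≤ ENNReal.ofReal (C * r ^ h)

/-- Shrinking-target data for a nonautonomous conformal IFS: the functions `β_n`
(positive on admissible tails), fixed admissible tails `ξ^{(n)}` and centers `x^{(n)} ∈ X`. -/
structure STData {d : ℕ} {E : Type} [DecidableEq E] (S : NCIFS d E) : Type where
  β : ℕ → (ℕ → E) → ℝ
  βpos : ∀ n ξ, (∀ j, ξ j ∈ S.I (n + j)) → 0 < β n ξ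
  ξt : ℕ → ℕ → E
  ξtmem : ∀ n j, ξt n j ∈ S.I (n + j)
  xc : ℕ → Pt d
  xcX : ∀ n, xc n ∈ S.X

namespace STData

variable {d : ℕ} {E : Type} [DecidableEq E] {S : NCIFS d E}

/-- The Birkhoff-type sum `S_nβ(ξ) = Σ_{k<n} β_k(σ^k ξ)`. -/
def Snβ (T : STData S) (n : ℕ) (ξ : ℕ → E) : ℝ :=
  ∑ k ∈ Finset.range n, T.β k (fun j => ξ (k + j))

/-- The radius `e^{-S_nβ(ωξ^{(n)})}` of the shrinking target `B_ω`. -/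
def radius (T : STData S) {n : ℕ} (ω : Fin n → E) : ℝ :=
  Real.exp (-(T.Snβ n (wcat ω (T.ξt n))))

/-- The shrinking target `B_ω = B(φ_ω^n(x^{(n)}), e^{-S_nβ(ωξ^{(n)})})`. -/
def tball [Nonempty E] (T : STData S) (n : ℕ) (ω : Fin n → E) : Set (Pt d) :=
  Metric.ball (S.comp 0 n (wext ω) (T.xc n)) (T.radius ω)

/-- The shrinking-target set `𝒟 = ⋂_{N≥1} ⋃_{n≥N} ⋃_{ω ∈ I^n} B_ω`. -/
def target [Nonempty E] (T : STData S) : Set (Pt d) :=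
  ⋂ N ∈ Set.Ici 1, ⋃ n ∈ Set.Ici N, ⋃ ω ∈ S.words 0 n, T.tball n ω

/-- The upper pressure `P̄_β(t)`. -/
def upperP (T : STData S) (t : ℝ) : ℝ :=
  Filter.limsup (fun n : ℕ =>
    (1 / (n : ℝ)) *
      Real.log (∑ ω ∈ S.words 0 n, Real.exp (-t * T.Snβ n (wcat ω (T.ξt n)))))
    Filter.atTop

/-- The lower pressure `P̲_β(t)`. -/
def lowerP (T : STData S) (t : ℝ) : ℝ :=
  Filter.liminf (fun n : ℕ =>
    (1 / (n : ℝ)) *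
      Real.log (∑ ω ∈ S.words 0 n, Real.exp (-t * T.Snβ n (wcat ω (T.ξt n)))))
    Filter.atTop

/-- The Bowen parameter `b = inf {t ≥ 0 : P̄_β(t) < 0}`. -/
def bowen (T : STData S) : ℝ := sInf {t : ℝ | 0 ≤ t ∧ T.upperP t < 0}

/-- `β` is tame: the upper pressure is strictly decreasing. -/
def tame (T : STData S) : Prop := StrictAntiOn T.upperP (Set.Ici 0)

/-- Exponentially shrinking condition with constants `al ≤ au`. -/
def ESC (T : STData S) (al au : ℝ) : Prop :=
  0 < al ∧ al ≤ au ∧ ∀ k, ∀ ξ : ℕ → E, (∀ j, ξ j ∈ S.I (k + j)) →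
    al ≤ T.β k ξ + Real.log (S.kminLv k) ∧ T.β k ξ + Real.log (S.kmaxLv k) ≤ au

/-- Linear variation condition. -/
def LVC (T : STData S) : Prop :=
  Filter.Tendsto (fun n : ℕ =>
    (1 / (n : ℝ)) *
      (sSup {r | ∃ ξ : ℕ → E, (∀ j, ξ j ∈ S.I j) ∧ r = T.Snβ n ξ} -
        sInf {r | ∃ ξ : ℕ → E, (∀ j, ξ j ∈ S.I j) ∧ r = T.Snβ n ξ}))
    Filter.atTop (nhds 0)

end STData


section AuxLemmas

variable {d : ℕ} {E : Type} [DecidableEq E] (S : NCIFS d E)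

lemma comp_congr : ∀ (q m : ℕ) (ξ ξ' : ℕ → E), (∀ j < q, ξ j = ξ' j) →
    S.comp m q ξ = S.comp m q ξ'
  | 0, _, _, _, _ => rfl
  | q+1, m, ξ, ξ', h => by
      simp only [NCIFS.comp]
      rw [h 0 (by omega), comp_congr q (m+1) _ _ (fun j hj => h (j+1) (by omega))]

lemma Dw_congr : ∀ (q m : ℕ) (ξ ξ' : ℕ → E), (∀ j < q, ξ j = ξ' j) → ∀ x,
    S.Dw m q ξ x = S.Dw m q ξ' x
  | 0, _, _, _, _, _ => rfl
  | q+1, m, ξ, ξ', h, x => by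
      simp only [NCIFS.Dw]
      rw [h 0 (by omega), comp_congr S q (m+1) _ _ (fun j hj => h (j+1) (by omega)),
        Dw_congr q (m+1) _ _ (fun j hj => h (j+1) (by omega)) x]

lemma comp_succ_right : ∀ (q m : ℕ) (ξ : ℕ → E),
    S.comp m (q+1) ξ = S.comp m q ξ ∘ S.φ (m+q) (ξ q)
  | 0, m, ξ => by
      simp only [NCIFS.comp]
      rfl
  | q+1, m, ξ => by
      show S.φ m (ξ 0) ∘ S.comp (m+1) (q+1) (fun j => ξ (j+1)) = _
      rw [comp_succ_right q (m+1) (fun j => ξ (j+1))]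
      have : m + 1 + q = m + (q+1) := by omega
      rw [this]
      rfl

lemma Dw_succ_right : ∀ (q m : ℕ) (ξ : ℕ → E) (x : Pt d),
    S.Dw m (q+1) ξ x = S.Dw m q ξ (S.φ (m+q) (ξ q) x) * S.D (m+q) (ξ q) x
  | 0, m, ξ, x => by
      simp only [NCIFS.Dw, NCIFS.comp]
      simp
  | q+1, m, ξ, x => by
      show S.D m (ξ 0) (S.comp (m+1) (q+1) (fun j => ξ (j+1)) x) *
        S.Dw (m+1) (q+1) (fun j => ξ (j+1)) x = _
      rw [Dw_succ_right q (m+1) (fun j => ξ (j+1)) x,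
        comp_succ_right S q (m+1) (fun j => ξ (j+1))]
      have h1 : m + 1 + q = m + (q+1) := by omega
      rw [h1]
      simp only [NCIFS.Dw, Function.comp_apply, Nat.add_comm 1 m]
      ring

lemma comp_split : ∀ (q p m : ℕ) (ξ : ℕ → E),
    S.comp m (p+q) ξ = S.comp m p ξ ∘ S.comp (m+p) q (fun j => ξ (p+j))
  | 0, p, m, ξ => by
      show S.comp m p ξ = S.comp m p ξ ∘ id
      rfl
  | q+1, p, m, ξ => by
      show S.comp m ((p+q)+1) ξ = _
      rw [comp_succ_right S (p+q) m ξ, comp_split q p m ξ,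
        comp_succ_right S q (m+p) (fun j => ξ (p+j))]
      have h1 : m + p + q = m + (p + q) := by omega
      rw [h1, Function.comp_assoc]

lemma comp_mapsV : ∀ (q m : ℕ) (ξ : ℕ → E), (∀ j < q, ξ j ∈ S.I (m+j)) →
    Set.MapsTo (S.comp m q ξ) S.V S.V
  | 0, _, _, _ => Set.mapsTo_id _
  | q+1, m, ξ, h => by
      have h0 : ξ 0 ∈ S.I m := by simpa using h 0 (by omega)
      have htail : ∀ j < q, ξ (j+1) ∈ S.I (m+1+j) := fun j hj => by
        have hmem := h (j+1) (by omega)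
        have e : m + (j+1) = m+1+j := by omega
        rwa [e] at hmem
      exact (S.mapsV m (ξ 0) h0).comp (comp_mapsV q (m+1) _ htail)

lemma comp_mapsX : ∀ (q m : ℕ) (ξ : ℕ → E), (∀ j < q, ξ j ∈ S.I (m+j)) →
    Set.MapsTo (S.comp m q ξ) S.X S.X
  | 0, _, _, _ => Set.mapsTo_id _
  | q+1, m, ξ, h => by
      have h0 : ξ 0 ∈ S.I m := by simpa using h 0 (by omega)
      have htail : ∀ j < q, ξ (j+1) ∈ S.I (m+1+j) := fun j hj => by
        have hmem := h (j+1) (by omega)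
        have e : m + (j+1) = m+1+j := by omega
        rwa [e] at hmem
      exact (S.mapsX m (ξ 0) h0).comp (comp_mapsX q (m+1) _ htail)

lemma Dw_pos : ∀ (q m : ℕ) (ξ : ℕ → E), (∀ j < q, ξ j ∈ S.I (m+j)) → ∀ x ∈ S.V,
    0 < S.Dw m q ξ x
  | 0, _, _, _, _, _ => one_pos
  | q+1, m, ξ, h, x, hx => by
      have h0 : ξ 0 ∈ S.I m := by simpa using h 0 (by omega)
      have htail : ∀ j < q, ξ (j+1) ∈ S.I (m+1+j) := fun j hj => by
        have hmem := h (j+1) (by omega)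
        have e : m + (j+1) = m+1+j := by omega
        rwa [e] at hmem
      have hc := comp_mapsV S q (m+1) _ htail hx
      exact mul_pos (S.Dpos m (ξ 0) h0 _ hc) (Dw_pos q (m+1) _ htail x hx)

lemma Dw_le_one : ∀ (q m : ℕ) (ξ : ℕ → E), (∀ j < q, ξ j ∈ S.I (m+j)) → ∀ x ∈ S.X,
    S.Dw m q ξ x ≤ 1
  | 0, _, _, _, _, _ => le_refl 1
  | q+1, m, ξ, h, x, hx => by
      have h0 : ξ 0 ∈ S.I m := by simpa using h 0 (by omega)
      have htail : ∀ j < q, ξ (j+1) ∈ S.I (m+1+j) := fun j hj => by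
        have hmem := h (j+1) (by omega)
        have e : m + (j+1) = m+1+j := by omega
        rwa [e] at hmem
      have hcX := comp_mapsX S q (m+1) _ htail hx
      have hD := S.contractX m (ξ 0) h0 _ hcX
      have hDpos := S.Dpos m (ξ 0) h0 _ (S.XsubV hcX)
      have h2 := Dw_le_one q (m+1) _ htail x hx
      have h2p := Dw_pos S q (m+1) _ htail x (S.XsubV hx)
      have : S.Dw m (q+1) ξ x = S.D m (ξ 0) (S.comp (m+1) q (fun j => ξ (j+1)) x) *
          S.Dw (m+1) q (fun j => ξ (j+1)) x := rfl
      rw [this]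
      nlinarith

lemma comp_hasFDeriv : ∀ (q m : ℕ) (ξ : ℕ → E), (∀ j < q, ξ j ∈ S.I (m+j)) → ∀ x ∈ S.V,
    ∃ A : Pt d →L[ℝ] Pt d, HasFDerivAt (S.comp m q ξ) A x ∧
      ∀ v, ‖A v‖ = S.Dw m q ξ x * ‖v‖
  | 0, m, ξ, _, x, _ =>
      ⟨ContinuousLinearMap.id ℝ (Pt d), hasFDerivAt_id x, fun v => by
        simp [NCIFS.Dw]⟩
  | q+1, m, ξ, h, x, hx => by
      have h0 : ξ 0 ∈ S.I m := by simpa using h 0 (by omega)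
      have htail : ∀ j < q, ξ (j+1) ∈ S.I (m+1+j) := fun j hj => by
        have hmem := h (j+1) (by omega)
        have e : m + (j+1) = m+1+j := by omega
        rwa [e] at hmem
      obtain ⟨B, hB, hBn⟩ := comp_hasFDeriv q (m+1) _ htail x hx
      have hcV := comp_mapsV S q (m+1) _ htail hx
      obtain ⟨A, hA, hAn⟩ := S.conformal m (ξ 0) h0 _ hcV
      refine ⟨A.comp B, hA.comp x hB, fun v => ?_⟩
      have : (A.comp B) v = A (B v) := rfl
      rw [this, hAn (B v), hBn v]
      have : S.Dw m (q+1) ξ x = S.D m (ξ 0) (S.comp (m+1) q (fun j => ξ (j+1)) x) *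
          S.Dw (m+1) q (fun j => ξ (j+1)) x := rfl
      rw [this]
      ring

lemma comp_lipschitz (q m : ℕ) (ξ : ℕ → E) (hξ : ∀ j < q, ξ j ∈ S.I (m+j))
    {L : ℝ} (hL : ∀ z ∈ S.X, S.Dw m q ξ z ≤ L) :
    ∀ x ∈ S.X, ∀ y ∈ S.X,
      dist (S.comp m q ξ x) (S.comp m q ξ y) ≤ L * dist x y := by
  classical
  intro x hx y hy
  have key : ∀ z, z ∈ S.X → ∃ A : Pt d →L[ℝ] Pt d, HasFDerivAt (S.comp m q ξ) A z ∧
      ∀ v, ‖A v‖ = S.Dw m q ξ z * ‖v‖ :=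
    fun z hz => comp_hasFDeriv S q m ξ hξ z (S.XsubV hz)
  choose A hA hAn using key
  set f' : Pt d → (Pt d →L[ℝ] Pt d) :=
    fun z => if hz : z ∈ S.X then A z hz else 0 with hf'
  have hL0 : 0 ≤ L := by
    obtain ⟨z, hz⟩ : S.X.Nonempty := ⟨x, hx⟩
    exact le_trans (le_of_lt (Dw_pos S q m ξ hξ z (S.XsubV hz))) (hL z hz)
  have hderiv : ∀ z ∈ S.X, HasFDerivWithinAt (S.comp m q ξ) (f' z) S.X z := by
    intro z hz
    rw [hf']
    simp only [dif_pos hz]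
    exact (hA z hz).hasFDerivWithinAt
  have hbound : ∀ z ∈ S.X, ‖f' z‖ ≤ L := by
    intro z hz
    rw [hf']
    simp only [dif_pos hz]
    refine ContinuousLinearMap.opNorm_le_bound _ hL0 (fun v => ?_)
    rw [hAn z hz v]
    exact mul_le_mul_of_nonneg_right (hL z hz) (norm_nonneg v)
  have := S.convexX.norm_image_sub_le_of_norm_hasFDerivWithin_le hderiv hbound hy hx
  rw [dist_eq_norm, dist_eq_norm]
  exact this

variable [Nonempty E]

lemma Xne : S.X.Nonempty := S.intX.mono interior_subset

lemma bddAbove_DSet (n : ℕ) : BddAbove {r | ∃ e ∈ S.I n, ∃ x ∈ S.X, r = S.D n e x} :=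
  ⟨1, fun r ⟨e, he, x, hx, hr⟩ => hr ▸ le_of_lt (S.contractX n e he x hx)⟩

lemma bddBelow_DSet (n : ℕ) : BddBelow {r | ∃ e ∈ S.I n, ∃ x ∈ S.X, r = S.D n e x} :=
  ⟨0, fun r ⟨e, he, x, hx, hr⟩ => hr ▸ le_of_lt (S.Dpos n e he x (S.XsubV hx))⟩

lemma D_le_kmaxLv {n : ℕ} {e : E} (he : e ∈ S.I n) {x : Pt d} (hx : x ∈ S.X) :
    S.D n e x ≤ S.kmaxLv n :=
  le_csSup (bddAbove_DSet S n) ⟨e, he, x, hx, rfl⟩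

lemma kminLv_le_D {n : ℕ} {e : E} (he : e ∈ S.I n) {x : Pt d} (hx : x ∈ S.X) :
    S.kminLv n ≤ S.D n e x :=
  csInf_le (bddBelow_DSet S n) ⟨e, he, x, hx, rfl⟩

lemma kmaxLv_pos (n : ℕ) : 0 < S.kmaxLv n := by
  obtain ⟨x, hx⟩ := Xne S
  obtain ⟨e, he⟩ := S.Ine n
  exact lt_of_lt_of_le (S.Dpos n e he x (S.XsubV hx)) (D_le_kmaxLv S he hx)

lemma kmaxLv_le_one (n : ℕ) : S.kmaxLv n ≤ 1 := by
  obtain ⟨x, hx⟩ := Xne S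
  obtain ⟨e, he⟩ := S.Ine n
  refine csSup_le ⟨_, e, he, x, hx, rfl⟩ ?_
  rintro r ⟨e', he', y, hy, rfl⟩
  exact le_of_lt (S.contractX n e' he' y hy)

lemma Dw_le_prod : ∀ (q m : ℕ) (ξ : ℕ → E), (∀ j < q, ξ j ∈ S.I (m+j)) → ∀ x ∈ S.X,
    S.Dw m q ξ x ≤ ∏ k ∈ Finset.range q, S.kmaxLv (m+k)
  | 0, _, _, _, _, _ => by simp [NCIFS.Dw]
  | q+1, m, ξ, h, x, hx => by
      have h0 : ξ 0 ∈ S.I m := by simpa using h 0 (by omega)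
      have htail : ∀ j < q, ξ (j+1) ∈ S.I (m+1+j) := fun j hj => by
        have hmem := h (j+1) (by omega)
        have e : m + (j+1) = m+1+j := by omega
        rwa [e] at hmem
      have hcX := comp_mapsX S q (m+1) _ htail hx
      have h1 : S.D m (ξ 0) (S.comp (m+1) q (fun j => ξ (j+1)) x) ≤ S.kmaxLv m :=
        D_le_kmaxLv S h0 hcX
      have h2 := Dw_le_prod q (m+1) _ htail x hx
      have hrw : ∏ k ∈ Finset.range (q+1), S.kmaxLv (m+k)
          = S.kmaxLv m * ∏ k ∈ Finset.range q, S.kmaxLv (m+1+k) := by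
        have e2 : ∏ k ∈ Finset.range q, S.kmaxLv (m+(k+1))
            = ∏ k ∈ Finset.range q, S.kmaxLv (m+1+k) :=
          Finset.prod_congr rfl (fun k _ => by rw [show m+(k+1) = m+1+k from by omega])
        rw [Finset.prod_range_succ', Nat.add_zero, e2, mul_comm]
      have hDpos := S.Dpos m (ξ 0) h0 _ (S.XsubV hcX)
      have hDwpos := Dw_pos S q (m+1) _ htail x (S.XsubV hx)
      have : S.Dw m (q+1) ξ x = S.D m (ξ 0) (S.comp (m+1) q (fun j => ξ (j+1)) x) *
          S.Dw (m+1) q (fun j => ξ (j+1)) x := rfl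
      rw [this, hrw]
      exact mul_le_mul h1 h2 (le_of_lt hDwpos) (le_of_lt (kmaxLv_pos S m))

lemma kminLv_nonneg (n : ℕ) : 0 ≤ S.kminLv n := by
  obtain ⟨x, hx⟩ := Xne S
  obtain ⟨e, he⟩ := S.Ine n
  exact le_csInf ⟨_, e, he, x, hx, rfl⟩
    (fun r ⟨e', he', y, hy, hr⟩ => hr ▸ le_of_lt (S.Dpos n e' he' y (S.XsubV hy)))

lemma prod_kminLv_le_Dw : ∀ (q m : ℕ) (ξ : ℕ → E), (∀ j < q, ξ j ∈ S.I (m+j)) →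
    ∀ x ∈ S.X, (∏ k ∈ Finset.range q, S.kminLv (m+k)) ≤ S.Dw m q ξ x
  | 0, _, _, _, _, _ => by simp [NCIFS.Dw]
  | q+1, m, ξ, h, x, hx => by
      have h0 : ξ 0 ∈ S.I m := by simpa using h 0 (by omega)
      have htail : ∀ j < q, ξ (j+1) ∈ S.I (m+1+j) := fun j hj => by
        have hmem := h (j+1) (by omega)
        have e : m + (j+1) = m+1+j := by omega
        rwa [e] at hmem
      have hcX := comp_mapsX S q (m+1) _ htail hx
      have h1 : S.kminLv m ≤ S.D m (ξ 0) (S.comp (m+1) q (fun j => ξ (j+1)) x) :=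
        kminLv_le_D S h0 hcX
      have h2 := prod_kminLv_le_Dw q (m+1) _ htail x hx
      have hrw : ∏ k ∈ Finset.range (q+1), S.kminLv (m+k)
          = S.kminLv m * ∏ k ∈ Finset.range q, S.kminLv (m+1+k) := by
        have e2 : ∏ k ∈ Finset.range q, S.kminLv (m+(k+1))
            = ∏ k ∈ Finset.range q, S.kminLv (m+1+k) :=
          Finset.prod_congr rfl (fun k _ => by rw [show m+(k+1) = m+1+k from by omega])
        rw [Finset.prod_range_succ', Nat.add_zero, e2, mul_comm]
      have : S.Dw m (q+1) ξ x = S.D m (ξ 0) (S.comp (m+1) q (fun j => ξ (j+1)) x) *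
          S.Dw (m+1) q (fun j => ξ (j+1)) x := rfl
      rw [this, hrw]
      refine mul_le_mul h1 h2 (Finset.prod_nonneg (fun k _ => kminLv_nonneg S _)) ?_
      exact le_of_lt (S.Dpos m (ξ 0) h0 _ (S.XsubV hcX))

lemma exists_word (m q : ℕ) : ∃ ω : Fin q → E, ω ∈ S.words m q := by
  refine ⟨fun k => (S.Ine (m + (k : ℕ))).choose, ?_⟩
  rw [NCIFS.words, Fintype.mem_piFinset]
  exact fun k => (S.Ine (m + (k : ℕ))).choose_spec

lemma wext_adm {q : ℕ} {ω : Fin q → E} (hω : ω ∈ S.words 0 q) :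
    ∀ j < q, wext ω j ∈ S.I (0 + j) := by
  intro j hj
  rw [wext, dif_pos hj]
  exact (Fintype.mem_piFinset.1 hω) ⟨j, hj⟩

lemma Dw_le_kmax {m : ℕ} {τ : Fin m → E} (hτ : τ ∈ S.words 0 m) {x : Pt d}
    (hx : x ∈ S.X) : S.Dw 0 m (wext τ) x ≤ S.kmax m := by
  refine le_csSup ⟨1, ?_⟩ ⟨τ, hτ, x, hx, rfl⟩
  rintro r ⟨σ, hσ, y, hy, rfl⟩
  exact Dw_le_one S m 0 (wext σ) (wext_adm S hσ) y hy

lemma kmax_pos (m : ℕ) : 0 < S.kmax m := by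
  obtain ⟨τ, hτ⟩ := exists_word S 0 m
  obtain ⟨x, hx⟩ := Xne S
  exact lt_of_lt_of_le (Dw_pos S m 0 (wext τ) (wext_adm S hτ) x (S.XsubV hx))
    (Dw_le_kmax S hτ hx)

lemma kmax_le_prod (m : ℕ) : S.kmax m ≤ ∏ k ∈ Finset.range m, S.kmaxLv k := by
  obtain ⟨τ, hτ⟩ := exists_word S 0 m
  obtain ⟨x, hx⟩ := Xne S
  refine csSup_le ⟨_, τ, hτ, x, hx, rfl⟩ ?_
  rintro r ⟨σ, hσ, y, hy, rfl⟩
  have := Dw_le_prod S m 0 (wext σ) (wext_adm S hσ) y hy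
  simpa using this

lemma Dw_le_normDw {m : ℕ} {τ : Fin m → E} (hτ : τ ∈ S.words 0 m) {x : Pt d}
    (hx : x ∈ S.X) : S.Dw 0 m (wext τ) x ≤ S.normDw 0 m (wext τ) := by
  refine le_csSup ⟨1, ?_⟩ ⟨x, hx, rfl⟩
  rintro r ⟨y, hy, rfl⟩
  exact Dw_le_one S m 0 (wext τ) (wext_adm S hτ) y hy

lemma kminLv_pos {K : ℝ} (hBDP : S.BDP K) (k : ℕ) : 0 < S.kminLv k := by
  classical
  obtain ⟨x₀, hx₀⟩ := Xne S
  set w : E → (Fin (k+1) → E) :=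
    fun e i => if ((i : ℕ) = k) then e else (S.Ine (0 + (i : ℕ))).choose with hw
  have hwmem : ∀ e ∈ S.I k, w e ∈ S.words 0 (k+1) := by
    intro e he
    rw [NCIFS.words, Fintype.mem_piFinset]
    intro i
    rw [hw]
    by_cases hik : (i : ℕ) = k
    · simp only [if_pos hik, hik]
      simpa [hik] using he
    · simp only [if_neg hik]
      exact (S.Ine (0 + (i : ℕ))).choose_spec
  have hKpos : 0 < K := lt_of_lt_of_le one_pos hBDP.1
  have key : ∀ e ∈ S.I k, ∀ x ∈ S.X,
      K⁻¹ * S.Dw 0 (k+1) (wext (w e)) x₀ ≤ S.D k e x := by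
    intro e he x hx
    have hadm := wext_adm S (hwmem e he)
    have hBD := hBDP.2 (k+1) (w e) (hwmem e he) x₀ hx₀ x hx
    have hsplit := Dw_succ_right S k 0 (wext (w e)) x
    have hwk : wext (w e) k = e := by
      rw [wext, dif_pos (Nat.lt_succ_self k), hw]
      simp
    rw [hwk] at hsplit
    have hφX : S.φ (0 + k) e x ∈ S.X := by
      have hek : e ∈ S.I (0 + k) := by simpa using he
      exact S.mapsX (0 + k) e hek hx
    have hle1 : S.Dw 0 k (wext (w e)) (S.φ (0 + k) e x) ≤ 1 :=
      Dw_le_one S k 0 (wext (w e)) (fun j hj => hadm j (by omega)) _ hφX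
    have hDpos : 0 < S.D (0 + k) e x := by
      have hek : e ∈ S.I (0 + k) := by simpa using he
      exact S.Dpos (0 + k) e hek x (S.XsubV hx)
    have h2 : S.Dw 0 (k+1) (wext (w e)) x ≤ S.D (0 + k) e x := by
      rw [hsplit]
      nlinarith
    have h3 : K⁻¹ * S.Dw 0 (k+1) (wext (w e)) x₀ ≤ S.Dw 0 (k+1) (wext (w e)) x := by
      rw [inv_mul_le_iff₀ hKpos]
      exact hBD
    simp only [Nat.zero_add] at h2
    exact le_trans h3 h2
  obtain ⟨e₀, he₀⟩ := S.Ine k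
  have hne : ((S.I k).image (fun e => K⁻¹ * S.Dw 0 (k+1) (wext (w e)) x₀)).Nonempty :=
    ⟨_, Finset.mem_image_of_mem _ he₀⟩
  set c : ℝ := (S.I k).inf' (S.Ine k) (fun e => K⁻¹ * S.Dw 0 (k+1) (wext (w e)) x₀)
    with hc
  have hcpos : 0 < c := by
    rw [hc, Finset.lt_inf'_iff]
    intro e he
    exact mul_pos (inv_pos.2 hKpos)
      (Dw_pos S (k+1) 0 (wext (w e)) (wext_adm S (hwmem e he)) x₀ (S.XsubV hx₀))
  refine lt_of_lt_of_le hcpos ?_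
  refine le_csInf ⟨_, e₀, he₀, x₀, hx₀, rfl⟩ ?_
  rintro r ⟨e, he, x, hx, rfl⟩
  exact le_trans (Finset.inf'_le _ he) (key e he x hx)

lemma comp_mem_limitSet {m : ℕ} {τ : Fin m → E} (hτ : τ ∈ S.words 0 m) {x : Pt d}
    (hx : x ∈ S.Jlv m) : S.comp 0 m (wext τ) x ∈ S.limitSet := by
  classical
  obtain ⟨ξ, hξI, hξx⟩ := hx
  have hxX : x ∈ S.X := by simpa [NCIFS.comp] using hξx 0
  rw [NCIFS.limitSet]
  simp only [Set.mem_iInter, Set.mem_Ici]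
  intro q hq
  simp only [Set.mem_iUnion]
  rcases le_or_gt q m with hqm | hmq
  · refine ⟨fun i => τ (Fin.castLE hqm i), ?_, ?_⟩
    · rw [NCIFS.words, Fintype.mem_piFinset]
      intro i
      exact (Fintype.mem_piFinset.1 hτ) (Fin.castLE hqm i)
    · have hsplit := comp_split S (m - q) q 0 (wext τ)
      rw [show q + (m-q) = m from by omega] at hsplit
      have hadm : ∀ j < m - q, wext τ (q+j) ∈ S.I ((0+q)+j) := by
        intro j hj
        have h1 : q + j < m := by omega
        rw [wext, dif_pos h1]
        have := (Fintype.mem_piFinset.1 hτ) ⟨q+j, h1⟩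
        have e : 0 + (q+j) = (0+q)+j := by omega
        rwa [e] at this
      have hmemX : S.comp (0+q) (m-q) (fun j => wext τ (q+j)) x ∈ S.X :=
        comp_mapsX S (m-q) (0+q) _ hadm hxX
      have hcg : S.comp 0 q (wext (fun i : Fin q => τ (Fin.castLE hqm i)))
          = S.comp 0 q (wext τ) := by
        refine comp_congr S q 0 _ _ (fun j hj => ?_)
        rw [wext, wext, dif_pos hj, dif_pos (lt_of_lt_of_le hj hqm)]
        exact congrArg τ (Fin.ext rfl)
      have heq : S.comp 0 m (wext τ) x
          = S.comp 0 q (wext (fun i : Fin q => τ (Fin.castLE hqm i)))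
            (S.comp (0+q) (m-q) (fun j => wext τ (q+j)) x) := by
        rw [hcg, hsplit]
        rfl
      rw [heq]
      exact Set.mem_image_of_mem _ hmemX
  · set t := q - m with ht
    obtain ⟨y, hyX, hyx⟩ := hξx t
    set σ : Fin q → E := fun i => if h : (i:ℕ) < m then τ ⟨(i:ℕ), h⟩ else ξ ((i:ℕ) - m)
      with hσ
    refine ⟨σ, ?_, ?_⟩
    · rw [NCIFS.words, Fintype.mem_piFinset]
      intro i
      rw [hσ]
      by_cases him : (i:ℕ) < m
      · simp only [dif_pos him]
        have := (Fintype.mem_piFinset.1 hτ) ⟨(i:ℕ), him⟩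
        exact this
      · simp only [dif_neg him]
        have := hξI ((i:ℕ) - m)
        have e : m + ((i:ℕ) - m) = 0 + (i:ℕ) := by omega
        rwa [e] at this
    · refine ⟨y, hyX, ?_⟩
      have hsplit := comp_split S t m 0 (wext σ)
      rw [show m + t = q from by omega] at hsplit
      have hc1 : S.comp 0 m (wext σ) = S.comp 0 m (wext τ) := by
        refine comp_congr S m 0 _ _ (fun j hj => ?_)
        rw [wext, wext, dif_pos (show j < q by omega), dif_pos hj, hσ]
        simp only [dif_pos hj]
      have hc2 : S.comp (0+m) t (fun j => wext σ (m+j)) = S.comp (0+m) t ξ := by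
        refine comp_congr S t (0+m) _ _ (fun j hj => ?_)
        rw [wext, dif_pos (show m + j < q by omega), hσ]
        simp only [dif_neg (show ¬ (m + j < m) by omega)]
        congr 1
        omega
      rw [hsplit, Function.comp_apply, hc1, hc2]
      have e0 : (0 : ℕ) + m = m := by omega
      rw [e0, hyx]

end AuxLemmas

lemma msupp_compl_null {d : ℕ} (μ : Measure (Pt d)) : μ (msupp μ)ᶜ = 0 := by
  classical
  have hx : ∀ x ∈ (msupp μ)ᶜ, ∃ r, 0 < r ∧ μ (Metric.ball x r) = 0 := by
    intro x hx
    simp only [msupp, Set.mem_compl_iff, Set.mem_setOf_eq, not_forall] at hx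
    obtain ⟨r, hr, h0⟩ := hx
    exact ⟨r, hr, le_zero_iff.1 (not_lt.1 h0)⟩
  choose! r hr hr0 using hx
  have hcover : (msupp μ)ᶜ ⊆ ⋃₀ ((fun x => Metric.ball x (r x)) '' (msupp μ)ᶜ) := by
    intro x hx
    exact ⟨_, Set.mem_image_of_mem _ hx, Metric.mem_ball_self (hr x hx)⟩
  refine measure_mono_null hcover ?_
  obtain ⟨Tc, hTcount, hTsub, hTU⟩ := TopologicalSpace.isOpen_sUnion_countable
    ((fun x => Metric.ball x (r x)) '' (msupp μ)ᶜ)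
    (by rintro s ⟨x, hx, rfl⟩; exact Metric.isOpen_ball)
  rw [← hTU]
  refine (measure_sUnion_null_iff hTcount).2 ?_
  intro s hs
  obtain ⟨x, hx, rfl⟩ := hTsub hs
  exact hr0 x hx

section STAux

variable {d : ℕ} {E : Type} [DecidableEq E] [Nonempty E] {S : NCIFS d E} (T : STData S)

lemma wcat_adm {m : ℕ} {τ : Fin m → E} (hτ : τ ∈ S.words 0 m) (k : ℕ) :
    ∀ j, wcat τ (T.ξt m) (k + j) ∈ S.I (k + j) := by
  intro j
  by_cases hlt : k + j < m
  · rw [wcat, dif_pos hlt]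
    have := (Fintype.mem_piFinset.1 hτ) ⟨k+j, hlt⟩
    simpa using this
  · rw [wcat, dif_neg hlt]
    have := T.ξtmem m (k + j - m)
    have e : m + (k + j - m) = k + j := by omega
    rwa [e] at this

lemma radius_pos {m : ℕ} (τ : Fin m → E) : 0 < T.radius τ := Real.exp_pos _

lemma radius_le_exp_mul_Dw {al au K : ℝ} (hESC : T.ESC al au) (hBDP : S.BDP K)
    {m : ℕ} {τ : Fin m → E} (hτ : τ ∈ S.words 0 m) {x : Pt d} (hx : x ∈ S.X) :
    T.radius τ ≤ Real.exp (-(m:ℝ) * al) * S.Dw 0 m (wext τ) x := by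
  have hterm : ∀ k ∈ Finset.range m,
      al - Real.log (S.kminLv k) ≤ T.β k (fun j => wcat τ (T.ξt m) (k+j)) := by
    intro k _
    have := (hESC.2.2 k _ (wcat_adm T hτ k)).1
    linarith
  have hsum : (m:ℝ) * al - ∑ k ∈ Finset.range m, Real.log (S.kminLv k)
      ≤ T.Snβ m (wcat τ (T.ξt m)) := by
    rw [STData.Snβ]
    have h1 := Finset.sum_le_sum hterm
    rw [Finset.sum_sub_distrib, Finset.sum_const, Finset.card_range, nsmul_eq_mul] at h1
    linarith
  have hrad : T.radius τ ≤ Real.exp (-(m:ℝ)*al) * ∏ k ∈ Finset.range m, S.kminLv k := by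
    have hprodexp : (∏ k ∈ Finset.range m, S.kminLv k)
        = Real.exp (∑ k ∈ Finset.range m, Real.log (S.kminLv k)) := by
      rw [Real.exp_sum]
      exact Finset.prod_congr rfl
        (fun k _ => (Real.exp_log (kminLv_pos S hBDP k)).symm)
    rw [STData.radius, hprodexp, ← Real.exp_add]
    exact Real.exp_le_exp.2 (by linarith)
  have hprod := prod_kminLv_le_Dw S m 0 (wext τ) (wext_adm S hτ) x hx
  simp only [Nat.zero_add] at hprod
  exact le_trans hrad (mul_le_mul_of_nonneg_left hprod (le_of_lt (Real.exp_pos _)))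

lemma exp_mul_prod_le_radius {al au : ℝ} (hESC : T.ESC al au)
    {n : ℕ} {ω : Fin n → E} (hω : ω ∈ S.words 0 n) :
    Real.exp (-(n:ℝ) * au) * ∏ k ∈ Finset.range n, S.kmaxLv k ≤ T.radius ω := by
  have hterm : ∀ k ∈ Finset.range n,
      T.β k (fun j => wcat ω (T.ξt n) (k+j)) ≤ au - Real.log (S.kmaxLv k) := by
    intro k _
    have := (hESC.2.2 k _ (wcat_adm T hω k)).2
    linarith
  have hsum : T.Snβ n (wcat ω (T.ξt n))
      ≤ (n:ℝ) * au - ∑ k ∈ Finset.range n, Real.log (S.kmaxLv k) := by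
    rw [STData.Snβ]
    have h1 := Finset.sum_le_sum hterm
    rw [Finset.sum_sub_distrib, Finset.sum_const, Finset.card_range, nsmul_eq_mul] at h1
    linarith
  have hprodexp : (∏ k ∈ Finset.range n, S.kmaxLv k)
      = Real.exp (∑ k ∈ Finset.range n, Real.log (S.kmaxLv k)) := by
    rw [Real.exp_sum]
    exact Finset.prod_congr rfl (fun k _ => (Real.exp_log (kmaxLv_pos S k)).symm)
  rw [STData.radius, hprodexp, ← Real.exp_add]
  exact Real.exp_le_exp.2 (by linarith)

lemma two_kmax_le_radius {al au θ : ℝ} (hESC : T.ESC al au) (hUCC : S.UCC θ)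
    {n m : ℕ} (hm : θ⁻¹ * (Real.log 2 + (n : ℝ) * (au + θ)) ≤ (m : ℝ))
    {ω : Fin n → E} (hω : ω ∈ S.words 0 n) :
    2 * S.kmax m ≤ T.radius ω := by
  have hθ : 0 < θ := hUCC.1
  have hau : 0 < au := lt_of_lt_of_le hESC.1 hESC.2.1
  have hθm : Real.log 2 + (n:ℝ) * (au + θ) ≤ θ * m := (inv_mul_le_iff₀ hθ).1 hm
  have hlog2 : (0:ℝ) < Real.log 2 := Real.log_pos (by norm_num)
  have hnm : (n:ℝ) < m := by
    nlinarith [Nat.cast_nonneg (α := ℝ) n]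
  have hnm' : n ≤ m := by exact_mod_cast le_of_lt hnm
  have ht : ((m - n : ℕ) : ℝ) = (m:ℝ) - n := by
    rw [Nat.cast_sub hnm']
  set t := m - n with htdef
  have hsplit := Finset.prod_range_add (fun k => S.kmaxLv k) n t
  rw [show n + t = m from by omega] at hsplit
  have h2 : ∏ k ∈ Finset.range t, S.kmaxLv (n+k) ≤ Real.exp (-θ * t) := by
    calc ∏ k ∈ Finset.range t, S.kmaxLv (n+k)
        ≤ ∏ _k ∈ Finset.range t, Real.exp (-θ) :=
          Finset.prod_le_prod (fun k _ => le_of_lt (kmaxLv_pos S _))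
            (fun k _ => hUCC.2 (n+k))
      _ = Real.exp (-θ) ^ t := by rw [Finset.prod_const, Finset.card_range]
      _ = Real.exp (-θ * t) := by
          rw [← Real.exp_nat_mul]
          ring_nf
  have h3 : Real.exp (-θ * t) ≤ (1/2) * Real.exp (-(n:ℝ) * au) := by
    have harg : -θ * t ≤ -Real.log 2 + (-(n:ℝ) * au) := by
      rw [ht]
      nlinarith
    calc Real.exp (-θ * t) ≤ Real.exp (-Real.log 2 + (-(n:ℝ) * au)) :=
          Real.exp_le_exp.2 harg
      _ = (1/2) * Real.exp (-(n:ℝ) * au) := by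
          rw [Real.exp_add, Real.exp_neg, Real.exp_log (by norm_num : (0:ℝ) < 2)]
          ring
  have hPpos : 0 < ∏ k ∈ Finset.range n, S.kmaxLv k :=
    Finset.prod_pos (fun k _ => kmaxLv_pos S k)
  have h4 : S.kmax m ≤ (∏ k ∈ Finset.range n, S.kmaxLv k) *
      ((1/2) * Real.exp (-(n:ℝ) * au)) := by
    calc S.kmax m ≤ ∏ k ∈ Finset.range m, S.kmaxLv k := kmax_le_prod S m
      _ = (∏ k ∈ Finset.range n, S.kmaxLv k) * ∏ k ∈ Finset.range t, S.kmaxLv (n+k) :=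
          hsplit
      _ ≤ (∏ k ∈ Finset.range n, S.kmaxLv k) * ((1/2) * Real.exp (-(n:ℝ) * au)) := by
          refine mul_le_mul_of_nonneg_left (le_trans h2 h3) (le_of_lt hPpos)
  have h5 := exp_mul_prod_le_radius T hESC hω
  nlinarith [Real.exp_pos (-(n:ℝ) * au)]

end STAux

/-- Counting lower bound: under ESC, UCC, NEQ (centers in `J_n ∩ X_ε`),
BDP with its ball-inclusion consequence, `diam X ≤ 1`, and an `h`-Ahlfors measure with
constant `C` supported exactly on `J`, there is `N` such that for all `n` and all
`m ≥ max(N, θ⁻¹(log 2 + n(ᾱ+θ)))` and every `ω ∈ I^n` with `e^{-S_nβ(ωξ^{(n)})} ≤ 2`,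
`#{τ ∈ I^m : B_τ ⊆ B_ω} ≥ C⁻² (e^{-S_nβ(ωξ^{(n)})}/(2κ̄_m))^h`. -/
theorem counting_lower_bound {d : ℕ} {E : Type} [DecidableEq E] [Nonempty E]
    (hd : 1 ≤ d) (S : NCIFS d E) (T : STData S)
    (al au θ K ε h C : ℝ) (μ : Measure (Pt d))
    (hESC : T.ESC al au) (hUCC : S.UCC θ) (hNEQ : S.NEQ ε)
    (hxc : ∀ n, T.xc n ∈ S.Jlv n ∩ S.Xeps ε)
    (hBDP : S.BDP K)
    (hgeom : ∀ n, ∀ ω ∈ S.words 0 n, ∀ (x : Pt d) (r : ℝ), Metric.ball x r ⊆ S.X →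
      Metric.ball (S.comp 0 n (wext ω) x) (K⁻¹ * S.normDw 0 n (wext ω) * r) ⊆
        S.comp 0 n (wext ω) '' Metric.ball x r)
    (hdiam : Metric.diam S.X ≤ 1) (hh : 0 < h)
    (hAhl : Ahlfors μ h C) (hsupp : msupp μ = S.limitSet) :
    ∃ N : ℕ, ∀ n m : ℕ, N ≤ m →
      θ⁻¹ * (Real.log 2 + (n : ℝ) * (au + θ)) ≤ (m : ℝ) →
      ∀ ω ∈ S.words 0 n, T.radius ω ≤ 2 →
        C⁻¹ ^ 2 * (T.radius ω / (2 * S.kmax m)) ^ h ≤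
          (({τ : Fin m → E | τ ∈ S.words 0 m ∧ T.tball m τ ⊆ T.tball n ω}).ncard : ℝ) := by
  classical
  have hθ : 0 < θ := hUCC.1
  have hε : 0 < ε := hNEQ.1
  have hK : 0 < K := lt_of_lt_of_le one_pos hBDP.1
  have hC : 0 < C := lt_of_lt_of_le one_pos hAhl.1
  have hal : 0 < al := hESC.1
  have hau : 0 < au := lt_of_lt_of_le hESC.1 hESC.2.1
  refine ⟨⌈Real.log (K / ε) / al⌉₊, ?_⟩
  intro n m hNm hm ω hω hrad2
  set r := T.radius ω with hrdef
  have hr0 : 0 < r := Real.exp_pos _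
  have h2k : 2 * S.kmax m ≤ r := two_kmax_le_radius T hESC hUCC hm hω
  have hkm : 0 < S.kmax m := kmax_pos S m
  have hθm : Real.log 2 + (n:ℝ) * (au + θ) ≤ θ * m := (inv_mul_le_iff₀ hθ).1 hm
  have hm1 : 1 ≤ m := by
    rcases Nat.eq_zero_or_pos m with h0 | h1
    · exfalso
      rw [h0] at hθm
      push_cast at hθm
      nlinarith [Nat.cast_nonneg (α := ℝ) n, Real.log_pos (show (1:ℝ) < 2 by norm_num)]
    · exact h1
  -- exp(-m al) ≤ ε / K
  have hexpm : Real.exp (-(m:ℝ) * al) ≤ ε / K := by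
    have h1 : Real.log (K/ε) / al ≤ ((⌈Real.log (K / ε) / al⌉₊ : ℕ) : ℝ) := Nat.le_ceil _
    have h2 : ((⌈Real.log (K / ε) / al⌉₊ : ℕ) : ℝ) ≤ (m:ℝ) := Nat.cast_le.2 hNm
    have h3 : Real.log (K/ε) ≤ (m:ℝ) * al := by
      rw [div_le_iff₀ hal] at h1
      nlinarith [mul_le_mul_of_nonneg_right h2 hal.le]
    calc Real.exp (-(m:ℝ)*al) = (Real.exp ((m:ℝ)*al))⁻¹ := by rw [neg_mul, Real.exp_neg]
      _ ≤ (Real.exp (Real.log (K/ε)))⁻¹ := by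
          exact inv_anti₀ (Real.exp_pos _) (Real.exp_le_exp.2 h3)
      _ = (K/ε)⁻¹ := by rw [Real.exp_log (div_pos hK hε)]
      _ = ε / K := by rw [inv_div]
  set c := S.comp 0 n (wext ω) (T.xc n) with hcdef
  have hcsupp : c ∈ msupp μ := by
    rw [hsupp]
    exact comp_mem_limitSet S hω (hxc n).1
  have hr2pos : 0 < r/2 := by linarith
  have hr2le1 : r/2 ≤ 1 := by linarith
  have hlow := (hAhl.2 c hcsupp (r/2) hr2pos hr2le1).1
  set F : Finset (Fin m → E) := (S.words 0 m).filter
    (fun τ => (S.comp 0 m (wext τ) '' S.X ∩ Metric.ball c (r/2)).Nonempty) with hF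
  -- covering
  have hcov : Metric.ball c (r/2) ⊆
      (⋃ τ ∈ F, S.comp 0 m (wext τ) '' S.X) ∪ (msupp μ)ᶜ := by
    intro z hz
    by_cases hzs : z ∈ msupp μ
    · left
      have hzJ : z ∈ S.limitSet := by rw [← hsupp]; exact hzs
      rw [NCIFS.limitSet] at hzJ
      simp only [Set.mem_iInter, Set.mem_Ici] at hzJ
      have hzm := hzJ m hm1
      simp only [Set.mem_iUnion] at hzm
      obtain ⟨τ, hτw, hτz⟩ := hzm
      exact Set.mem_biUnion (Finset.mem_filter.2 ⟨hτw, ⟨z, hτz, hz⟩⟩) hτz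
    · right; exact hzs
  -- kmax m < 1
  have hprodm : S.kmax m ≤ Real.exp (-θ * m) := by
    calc S.kmax m ≤ ∏ k ∈ Finset.range m, S.kmaxLv k := kmax_le_prod S m
      _ ≤ ∏ _k ∈ Finset.range m, Real.exp (-θ) :=
          Finset.prod_le_prod (fun k _ => (kmaxLv_pos S k).le) (fun k _ => hUCC.2 k)
      _ = Real.exp (-θ) ^ m := by rw [Finset.prod_const, Finset.card_range]
      _ = Real.exp (-θ * m) := by rw [← Real.exp_nat_mul]; ring_nf
  have hkmlt1 : S.kmax m < 1 := by
    refine lt_of_le_of_lt hprodm ?_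
    rw [Real.exp_lt_one_iff]
    have : (1:ℝ) ≤ (m:ℝ) := by exact_mod_cast hm1
    nlinarith
  -- per-piece measure bound
  have hpiece : ∀ τ ∈ F, μ (S.comp 0 m (wext τ) '' S.X)
      ≤ ENNReal.ofReal (C * S.kmax m ^ h) := by
    intro τ hτF
    have hτw : τ ∈ S.words 0 m := (Finset.mem_filter.1 hτF).1
    set cτ := S.comp 0 m (wext τ) (T.xc m) with hcτ
    have hcτJ : cτ ∈ msupp μ := by
      rw [hsupp]
      exact comp_mem_limitSet S hτw (hxc m).1
    have himg : S.comp 0 m (wext τ) '' S.X ⊆ Metric.closedBall cτ (S.kmax m) := by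
      rintro _ ⟨w, hw, rfl⟩
      rw [Metric.mem_closedBall]
      calc dist (S.comp 0 m (wext τ) w) cτ
          ≤ S.kmax m * dist w (T.xc m) :=
            comp_lipschitz S m 0 (wext τ) (wext_adm S hτw)
              (fun z hz => Dw_le_kmax S hτw hz) w hw (T.xc m) (T.xcX m)
        _ ≤ S.kmax m * 1 := mul_le_mul_of_nonneg_left
            (le_trans (Metric.dist_le_diam_of_mem S.compactX.isBounded hw (T.xcX m))
              hdiam) hkm.le
        _ = S.kmax m := mul_one _
    refine le_trans (measure_mono himg) ?_
    have hcont : ContinuousAt (fun s : ℝ => ENNReal.ofReal (C * s ^ h)) (S.kmax m) := by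
      refine ENNReal.continuous_ofReal.continuousAt.comp ?_
      exact continuousAt_const.mul (Real.continuousAt_rpow_const _ _ (Or.inl hkm.ne'))
    have htend : Filter.Tendsto (fun s : ℝ => ENNReal.ofReal (C * s ^ h))
        (nhdsWithin (S.kmax m) (Set.Ioi (S.kmax m)))
        (nhds (ENNReal.ofReal (C * S.kmax m ^ h))) :=
      tendsto_nhdsWithin_of_tendsto_nhds hcont.tendsto
    refine ge_of_tendsto htend ?_
    filter_upwards [Ioo_mem_nhdsGT_of_mem (Set.left_mem_Ico.2 hkmlt1)] with s hs
    refine le_trans (measure_mono (Metric.closedBall_subset_ball hs.1)) ?_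
    exact (hAhl.2 cτ hcτJ s (lt_trans hkm hs.1) hs.2.le).2
  -- sum up
  have hmeasle : μ (Metric.ball c (r/2))
      ≤ (F.card : ENNReal) * ENNReal.ofReal (C * S.kmax m ^ h) := by
    calc μ (Metric.ball c (r/2))
        ≤ μ ((⋃ τ ∈ F, S.comp 0 m (wext τ) '' S.X) ∪ (msupp μ)ᶜ) := measure_mono hcov
      _ ≤ μ (⋃ τ ∈ F, S.comp 0 m (wext τ) '' S.X) + μ (msupp μ)ᶜ := measure_union_le _ _
      _ = μ (⋃ τ ∈ F, S.comp 0 m (wext τ) '' S.X) := by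
          rw [msupp_compl_null, add_zero]
      _ ≤ ∑ τ ∈ F, μ (S.comp 0 m (wext τ) '' S.X) := measure_biUnion_finset_le F _
      _ ≤ ∑ τ ∈ F, ENNReal.ofReal (C * S.kmax m ^ h) := Finset.sum_le_sum hpiece
      _ = (F.card : ENNReal) * ENNReal.ofReal (C * S.kmax m ^ h) := by
          rw [Finset.sum_const, nsmul_eq_mul]
  have hreal : C⁻¹ * (r/2) ^ h ≤ (F.card : ℝ) * (C * S.kmax m ^ h) := by
    have hle := le_trans hlow hmeasle
    have hrw : ((F.card : ENNReal) * ENNReal.ofReal (C * S.kmax m ^ h))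
        = ENNReal.ofReal ((F.card : ℝ) * (C * S.kmax m ^ h)) := by
      rw [ENNReal.ofReal_mul (by positivity : (0:ℝ) ≤ (F.card:ℝ)), ENNReal.ofReal_natCast]
    rw [hrw] at hle
    exact (ENNReal.ofReal_le_ofReal_iff (by positivity)).1 hle
  -- count bound
  have ht : 0 < S.kmax m ^ h := Real.rpow_pos_of_pos hkm h
  have hcount : C⁻¹ ^ 2 * (r / (2 * S.kmax m)) ^ h ≤ (F.card : ℝ) := by
    have hrw2 : (r / (2 * S.kmax m)) ^ h = (r/2) ^ h / (S.kmax m) ^ h := by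
      rw [show r / (2 * S.kmax m) = (r/2) / S.kmax m from by rw [div_div]]
      exact Real.div_rpow (by linarith : (0:ℝ) ≤ r/2) hkm.le h
    rw [hrw2, ← mul_div_assoc, div_le_iff₀ ht]
    have h6 := mul_le_mul_of_nonneg_left hreal (inv_nonneg.2 hC.le)
    have hCinv : C⁻¹ * C = 1 := inv_mul_cancel₀ (ne_of_gt hC)
    calc C⁻¹ ^ 2 * (r/2) ^ h = C⁻¹ * (C⁻¹ * (r/2) ^ h) := by ring
      _ ≤ C⁻¹ * ((F.card : ℝ) * (C * S.kmax m ^ h)) := h6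
      _ = (C⁻¹ * C) * ((F.card : ℝ) * S.kmax m ^ h) := by ring
      _ = (F.card : ℝ) * S.kmax m ^ h := by rw [hCinv, one_mul]
  -- inclusion of targets
  have hincl : ∀ τ ∈ F, T.tball m τ ⊆ T.tball n ω := by
    intro τ hτF
    have hτw : τ ∈ S.words 0 m := (Finset.mem_filter.1 hτF).1
    obtain ⟨y, hyimg, hyball⟩ := (Finset.mem_filter.1 hτF).2
    obtain ⟨v, hv, hvy⟩ := hyimg
    have hballX : Metric.ball (T.xc m) ε ⊆ S.X := by
      intro u hu
      by_contra huX
      refine (hxc m).2.2 ?_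
      refine Set.mem_biUnion (show u ∈ S.Xᶜ from huX) ?_
      rw [Metric.mem_ball, dist_comm]
      exact Metric.mem_ball.1 hu
    have hDwpos : 0 < S.Dw 0 m (wext τ) (T.xc m) :=
      Dw_pos S m 0 _ (wext_adm S hτw) _ (S.XsubV (T.xcX m))
    have hradτ : T.radius τ ≤ K⁻¹ * S.normDw 0 m (wext τ) * ε := by
      calc T.radius τ
          ≤ Real.exp (-(m:ℝ)*al) * S.Dw 0 m (wext τ) (T.xc m) :=
            radius_le_exp_mul_Dw T hESC hBDP hτw (T.xcX m)
        _ ≤ (ε/K) * S.Dw 0 m (wext τ) (T.xc m) :=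
            mul_le_mul_of_nonneg_right hexpm hDwpos.le
        _ ≤ (ε/K) * S.normDw 0 m (wext τ) :=
            mul_le_mul_of_nonneg_left (Dw_le_normDw S hτw (T.xcX m)) (by positivity)
        _ = K⁻¹ * S.normDw 0 m (wext τ) * ε := by ring
    have hsubX : T.tball m τ ⊆ S.comp 0 m (wext τ) '' S.X := by
      rw [STData.tball]
      refine subset_trans (Metric.ball_subset_ball hradτ) ?_
      refine subset_trans (hgeom m τ hτw (T.xc m) ε hballX) ?_
      exact Set.image_mono (fun u hu => hballX hu)
    intro z hz
    obtain ⟨w, hw, hwz⟩ := hsubX hz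
    show z ∈ Metric.ball c r
    rw [Metric.mem_ball]
    have hzy : dist z y ≤ S.kmax m := by
      rw [← hwz, ← hvy]
      calc dist (S.comp 0 m (wext τ) w) (S.comp 0 m (wext τ) v)
          ≤ S.kmax m * dist w v :=
            comp_lipschitz S m 0 (wext τ) (wext_adm S hτw)
              (fun p hp => Dw_le_kmax S hτw hp) w hw v hv
        _ ≤ S.kmax m * 1 := mul_le_mul_of_nonneg_left
            (le_trans (Metric.dist_le_diam_of_mem S.compactX.isBounded hw hv) hdiam)
            hkm.le
        _ = S.kmax m := mul_one _
    have hyc : dist y c < r/2 := Metric.mem_ball.1 hyball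
    calc dist z c ≤ dist z y + dist y c := dist_triangle _ _ _
      _ < S.kmax m + r/2 := by linarith
      _ ≤ r := by linarith
  -- conclude
  have hsub2 : (↑F : Set (Fin m → E)) ⊆
      {τ : Fin m → E | τ ∈ S.words 0 m ∧ T.tball m τ ⊆ T.tball n ω} := by
    intro τ hτ
    have hτF : τ ∈ F := hτ
    exact ⟨(Finset.mem_filter.1 hτF).1, hincl τ hτF⟩
  have hfin : {τ : Fin m → E | τ ∈ S.words 0 m ∧ T.tball m τ ⊆ T.tball n ω}.Finite :=
    Set.Finite.subset (S.words 0 m).finite_toSet (fun τ hτ => hτ.1)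
  have hcard := Set.ncard_le_ncard hsub2 hfin
  rw [Set.ncard_coe_finset] at hcard
  refine le_trans hcount ?_
  exact_mod_cast hcard
end
end

section
/- Assume Φ satisfies BDP with constant K. Fix h > 0 and n, q ≥ 1, and let μ be a Borel probability measure such that μ(φ_τ^{n+q}(X)) = ‖Dφ_τ^{n+q}‖^h / Z_{n+q}(h) for every τ ∈ I^{n+q}, μ is supported on ⋃_{τ∈I^{n+q}} φ_τ^{n+q}(X), and any two of the sets φ_τ^{n+q}(X) (τ ∈ I^{n+q}) intersect in a μ-null set. Then for every ω ∈ I^n, μ(φ_ω^n(X)) ≥ K^{-h} · Z_n(h)^{-1} · ‖Dφ_ω^n‖^h. -/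
open Set Metric MeasureTheory Filter

noncomputable section

namespace NCIFS

variable {d : ℕ} {E : Type} [DecidableEq E]

lemma comp_congr (S : NCIFS d E) {a : ℕ} {ξ ξ' : ℕ → E} (m : ℕ)
    (h : ∀ j < a, ξ j = ξ' j) : S.comp m a ξ = S.comp m a ξ' := by
  induction a generalizing m ξ ξ' with
  | zero => rfl
  | succ a ih =>
    show S.φ m (ξ 0) ∘ _ = S.φ m (ξ' 0) ∘ _
    rw [h 0 (Nat.succ_pos a), ih (m + 1) (fun j hj => h (j + 1) (by omega))]

lemma Dw_congr (S : NCIFS d E) {a : ℕ} {ξ ξ' : ℕ → E} (m : ℕ) (x : Pt d)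
    (h : ∀ j < a, ξ j = ξ' j) : S.Dw m a ξ x = S.Dw m a ξ' x := by
  induction a generalizing m ξ ξ' with
  | zero => rfl
  | succ a ih =>
    show S.D m (ξ 0) _ * _ = S.D m (ξ' 0) _ * _
    rw [h 0 (Nat.succ_pos a), ih (m + 1) (fun j hj => h (j + 1) (by omega)),
      S.comp_congr (m + 1) (fun j hj => h (j + 1) (by omega))]

lemma comp_mapsTo (S : NCIFS d E) {a : ℕ} {ξ : ℕ → E} (m : ℕ)
    (h : ∀ j < a, ξ j ∈ S.I (m + j)) : Set.MapsTo (S.comp m a ξ) S.X S.X := by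
  induction a generalizing m ξ with
  | zero => exact Set.mapsTo_id _
  | succ a ih =>
    have h0 : ξ 0 ∈ S.I m := by simpa using h 0 (Nat.succ_pos a)
    exact (S.mapsX m (ξ 0) h0).comp
      (ih (m + 1) (fun j hj => by
        have := h (j + 1) (by omega)
        simpa [Nat.add_assoc, Nat.add_comm 1 j] using this))

lemma comp_mapsToV (S : NCIFS d E) {a : ℕ} {ξ : ℕ → E} (m : ℕ)
    (h : ∀ j < a, ξ j ∈ S.I (m + j)) : Set.MapsTo (S.comp m a ξ) S.V S.V := by
  induction a generalizing m ξ with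
  | zero => exact Set.mapsTo_id _
  | succ a ih =>
    have h0 : ξ 0 ∈ S.I m := by simpa using h 0 (Nat.succ_pos a)
    exact (S.mapsV m (ξ 0) h0).comp
      (ih (m + 1) (fun j hj => by
        have := h (j + 1) (by omega)
        simpa [Nat.add_assoc, Nat.add_comm 1 j] using this))

lemma φ_continuousOn (S : NCIFS d E) {m : ℕ} {e : E} (he : e ∈ S.I m) :
    ContinuousOn (S.φ m e) S.V := by
  intro x hx
  obtain ⟨A, hA, -⟩ := S.conformal m e he x hx
  exact hA.continuousAt.continuousWithinAt

lemma comp_continuousOn (S : NCIFS d E) {a : ℕ} {ξ : ℕ → E} (m : ℕ)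
    (h : ∀ j < a, ξ j ∈ S.I (m + j)) : ContinuousOn (S.comp m a ξ) S.V := by
  induction a generalizing m ξ with
  | zero => exact continuousOn_id
  | succ a ih =>
    have h0 : ξ 0 ∈ S.I m := by simpa using h 0 (Nat.succ_pos a)
    have htail : ∀ j < a, ξ (j + 1) ∈ S.I (m + 1 + j) := fun j hj => by
      have := h (j + 1) (by omega)
      simpa [Nat.add_assoc, Nat.add_comm 1 j] using this
    exact (S.φ_continuousOn h0).comp (ih (m + 1) htail)
      (S.comp_mapsToV (m + 1) htail)

lemma Dw_pos (S : NCIFS d E) {a : ℕ} {ξ : ℕ → E} (m : ℕ)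
    (h : ∀ j < a, ξ j ∈ S.I (m + j)) {x : Pt d} (hx : x ∈ S.X) :
    0 < S.Dw m a ξ x := by
  induction a generalizing m ξ with
  | zero => exact one_pos
  | succ a ih =>
    have h0 : ξ 0 ∈ S.I m := by simpa using h 0 (Nat.succ_pos a)
    have htail : ∀ j < a, ξ (j + 1) ∈ S.I (m + 1 + j) := fun j hj => by
      have := h (j + 1) (by omega)
      simpa [Nat.add_assoc, Nat.add_comm 1 j] using this
    have hy : S.comp (m + 1) a (fun j => ξ (j + 1)) x ∈ S.X :=
      S.comp_mapsTo (m + 1) htail hx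
    exact mul_pos (S.Dpos m (ξ 0) h0 _ (S.XsubV hy)) (ih (m + 1) htail)

lemma comp_add (S : NCIFS d E) (m a b : ℕ) (ξ : ℕ → E) :
    S.comp m (a + b) ξ =
      S.comp m a ξ ∘ S.comp (m + a) b (fun j => ξ (a + j)) := by
  induction a generalizing m ξ with
  | zero => simp [NCIFS.comp]
  | succ a ih =>
    have h1 : a + 1 + b = (a + b) + 1 := by omega
    rw [h1]
    show S.φ m (ξ 0) ∘ S.comp (m + 1) (a + b) (fun j => ξ (j + 1)) = _
    rw [ih (m + 1) (fun j => ξ (j + 1))]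
    have h2 : m + 1 + a = m + (a + 1) := by omega
    have h3 : (fun j => ξ (a + j + 1)) = fun j => ξ (a + 1 + j) := by
      funext j; congr 1; omega
    show S.φ m (ξ 0) ∘ (S.comp (m + 1) a (fun j => ξ (j + 1)) ∘
      S.comp (m + 1 + a) b (fun j => ξ (a + j + 1))) = _
    rw [h2, h3]
    rfl

lemma Dw_add (S : NCIFS d E) (m a b : ℕ) (ξ : ℕ → E) (x : Pt d) :
    S.Dw m (a + b) ξ x =
      S.Dw m a ξ (S.comp (m + a) b (fun j => ξ (a + j)) x) *
        S.Dw (m + a) b (fun j => ξ (a + j)) x := by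
  induction a generalizing m ξ with
  | zero => simp [NCIFS.Dw, NCIFS.comp]
  | succ a ih =>
    have h1 : a + 1 + b = (a + b) + 1 := by omega
    rw [h1]
    show S.D m (ξ 0) (S.comp (m + 1) (a + b) (fun j => ξ (j + 1)) x) *
        S.Dw (m + 1) (a + b) (fun j => ξ (j + 1)) x = _
    rw [ih (m + 1) (fun j => ξ (j + 1)),
      S.comp_add (m + 1) a b (fun j => ξ (j + 1))]
    have h2 : m + 1 + a = m + (a + 1) := by omega
    have h3 : (fun j => ξ (a + j + 1)) = fun j => ξ (a + 1 + j) := by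
      funext j; congr 1; omega
    show S.D m (ξ 0) (S.comp (m + 1) a (fun j => ξ (j + 1))
          (S.comp (m + 1 + a) b (fun j => ξ (a + j + 1)) x)) *
        (S.Dw (m + 1) a (fun j => ξ (j + 1))
            (S.comp (m + 1 + a) b (fun j => ξ (a + j + 1)) x) *
          S.Dw (m + 1 + a) b (fun j => ξ (a + j + 1)) x) = _
    rw [h2, h3]
    show _ = S.D m (ξ 0) _ * S.Dw (m + 1) a _ _ * S.Dw (m + (a + 1)) b _ x
    ring

lemma X_nonempty (S : NCIFS d E) : S.X.Nonempty :=
  S.intX.mono interior_subset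

lemma wext_adm [Nonempty E] (S : NCIFS d E) {a : ℕ} {ω : Fin a → E}
    (hω : ω ∈ S.words 0 a) : ∀ j < a, wext ω j ∈ S.I (0 + j) := by
  intro j hj
  rw [NCIFS.words, Fintype.mem_piFinset] at hω
  simpa [wext, hj] using hω ⟨j, hj⟩

lemma le_normDw [Nonempty E] (S : NCIFS d E) {a : ℕ} {ω : Fin a → E}
    (hω : ω ∈ S.words 0 a) {K : ℝ} (hBDP : S.BDP K) {x : Pt d} (hx : x ∈ S.X) :
    S.Dw 0 a (wext ω) x ≤ S.normDw 0 a (wext ω) := by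
  have hmem : S.Dw 0 a (wext ω) x ∈ {r | ∃ x ∈ S.X, r = S.Dw 0 a (wext ω) x} :=
    ⟨x, hx, rfl⟩
  refine le_csSup ⟨K * S.Dw 0 a (wext ω) x, ?_⟩ hmem
  rintro r ⟨y, hy, rfl⟩
  exact hBDP.2 a ω hω y hy x hx

lemma normDw_le [Nonempty E] (S : NCIFS d E) {a : ℕ} {ω : Fin a → E}
    (hω : ω ∈ S.words 0 a) {K : ℝ} (hBDP : S.BDP K) {x : Pt d} (hx : x ∈ S.X) :
    S.normDw 0 a (wext ω) ≤ K * S.Dw 0 a (wext ω) x := by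
  apply Real.sSup_le
  · rintro r ⟨y, hy, rfl⟩
    exact hBDP.2 a ω hω y hy x hx
  · have h1 := S.Dw_pos 0 (S.wext_adm hω) hx
    have hK : (0:ℝ) ≤ K := le_trans zero_le_one hBDP.1
    positivity

lemma wext_append_lt [Nonempty E] {n q : ℕ} (ω : Fin n → E) (γ : Fin q → E)
    {j : ℕ} (hj : j < n) : wext (Fin.append ω γ) j = wext ω j := by
  have hj' : j < n + q := by omega
  have h1 : (⟨j, hj'⟩ : Fin (n + q)) = Fin.castAdd q ⟨j, hj⟩ := rfl
  simp only [wext, dif_pos hj, dif_pos hj', h1, Fin.append_left]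

lemma wext_append_add [Nonempty E] {n q : ℕ} (ω : Fin n → E) (γ : Fin q → E)
    {j : ℕ} (hj : j < q) : wext (Fin.append ω γ) (n + j) = γ ⟨j, hj⟩ := by
  have hj' : n + j < n + q := by omega
  have h1 : (⟨n + j, hj'⟩ : Fin (n + q)) = Fin.natAdd n ⟨j, hj⟩ := rfl
  simp only [wext, dif_pos hj', h1, Fin.append_right]

lemma append_mem_words [Nonempty E] (S : NCIFS d E) {n q : ℕ}
    {ω : Fin n → E} {γ : Fin q → E}
    (hω : ω ∈ S.words 0 n) (hγ : γ ∈ S.words n q) :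
    Fin.append ω γ ∈ S.words 0 (n + q) := by
  rw [NCIFS.words, Fintype.mem_piFinset] at *
  intro k
  rcases lt_or_ge (k : ℕ) n with h | h
  · have h1 : k = Fin.castAdd q ⟨(k : ℕ), h⟩ := by ext; simp
    rw [h1, Fin.append_left]
    simpa using hω ⟨(k : ℕ), h⟩
  · have hk : (k : ℕ) - n < q := by omega
    have h1 : k = Fin.natAdd n ⟨(k : ℕ) - n, hk⟩ := by ext; simp; omega
    rw [h1, Fin.append_right]
    have h3 : 0 + ((Fin.natAdd n ⟨(k : ℕ) - n, hk⟩ : Fin (n + q)) : ℕ) =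
        n + ((k : ℕ) - n) := by simp [Fin.natAdd]
    rw [h3]
    exact hγ ⟨(k : ℕ) - n, hk⟩

lemma words_nonempty [Nonempty E] (S : NCIFS d E) (m a : ℕ) :
    (S.words m a).Nonempty := by
  rw [NCIFS.words]
  exact Fintype.piFinset_nonempty.mpr fun k => S.Ine _

lemma normDw_pos [Nonempty E] (S : NCIFS d E) {a : ℕ} {ω : Fin a → E}
    (hω : ω ∈ S.words 0 a) {K : ℝ} (hBDP : S.BDP K) :
    0 < S.normDw 0 a (wext ω) := by
  obtain ⟨x, hx⟩ := S.X_nonempty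
  exact lt_of_lt_of_le (S.Dw_pos 0 (S.wext_adm hω) hx) (S.le_normDw hω hBDP hx)

end NCIFS

/-- If `μ` gives each cylinder `φ_τ^{n+q}(X)` mass
`‖Dφ_τ^{n+q}‖^h / Z_{n+q}(h)`, is supported on the union of these cylinders, and distinct
cylinders intersect in null sets, then under BDP with constant `K`, for every `ω ∈ I^n`,
`μ(φ_ω^n(X)) ≥ K^{-h} Z_n(h)⁻¹ ‖Dφ_ω^n‖^h`. -/
theorem cylinder_mass_lower_bound {d : ℕ} {E : Type} [DecidableEq E] [Nonempty E]
    (hd : 1 ≤ d) (S : NCIFS d E)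
    (K h : ℝ) (hBDP : S.BDP K) (hh : 0 < h)
    (n q : ℕ) (hn : 1 ≤ n) (hq : 1 ≤ q)
    (μ : Measure (Pt d)) [IsProbabilityMeasure μ]
    (hval : ∀ τ ∈ S.words 0 (n + q),
      μ (S.comp 0 (n + q) (wext τ) '' S.X) =
        ENNReal.ofReal ((S.normDw 0 (n + q) (wext τ)) ^ h / S.Z (n + q) h))
    (hsupp : μ (⋃ τ ∈ S.words 0 (n + q), S.comp 0 (n + q) (wext τ) '' S.X)ᶜ = 0)
    (hnull : ∀ τ ∈ S.words 0 (n + q), ∀ τ' ∈ S.words 0 (n + q), τ ≠ τ' →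
      μ (S.comp 0 (n + q) (wext τ) '' S.X ∩ S.comp 0 (n + q) (wext τ') '' S.X) = 0) :
    ∀ ω ∈ S.words 0 n,
      ENNReal.ofReal (K ^ (-h) * (S.Z n h)⁻¹ * (S.normDw 0 n (wext ω)) ^ h) ≤
        μ (S.comp 0 n (wext ω) '' S.X) := by
  classical
  intro ω hω
  have hK1 : 1 ≤ K := hBDP.1
  have hK0 : (0 : ℝ) < K := lt_of_lt_of_le one_pos hK1
  set W := S.normDw 0 n (wext ω) with hWdef
  have hWpos : 0 < W := S.normDw_pos hω hBDP
  obtain ⟨x₀, hx₀⟩ := S.X_nonempty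
  -- admissibility of tails
  have hadm_tail : ∀ γ ∈ S.words n q, ∀ j < q, wext γ j ∈ S.I (n + j) := by
    intro γ hγ j hj
    rw [NCIFS.words, Fintype.mem_piFinset] at hγ
    simpa [wext, hj] using hγ ⟨j, hj⟩
  have htail_eq : ∀ (ω' : Fin n → E) (γ : Fin q → E), ∀ j < q,
      wext (Fin.append ω' γ) (n + j) = wext γ j := by
    intro ω' γ j hj
    rw [NCIFS.wext_append_add ω' γ hj]
    simp [wext, hj]
  -- decomposition of Dw along the split τ = ω'γ
  have hdecomp : ∀ (ω' : Fin n → E), ∀ γ ∈ S.words n q, ∀ z ∈ S.X,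
      S.Dw 0 (n + q) (wext (Fin.append ω' γ)) z =
        S.Dw 0 n (wext ω') (S.comp n q (wext γ) z) * S.Dw n q (wext γ) z := by
    intro ω' γ hγ z hz
    have h1 := S.Dw_add 0 n q (wext (Fin.append ω' γ)) z
    rw [Nat.zero_add] at h1
    rw [h1, S.Dw_congr n z (htail_eq ω' γ), S.comp_congr n (htail_eq ω' γ),
      S.Dw_congr 0 _ (fun j hj => NCIFS.wext_append_lt ω' γ hj)]
  -- bound on the tail derivative
  have htailbd : ∀ γ ∈ S.words n q, ∀ z ∈ S.X,
      S.Dw n q (wext γ) z ≤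
        K / W * S.normDw 0 (n + q) (wext (Fin.append ω γ)) := by
    intro γ hγ z hz
    have hmemτ := S.append_mem_words hω hγ
    have hy : S.comp n q (wext γ) z ∈ S.X := S.comp_mapsTo n (hadm_tail γ hγ) hz
    have h1 : S.Dw 0 (n + q) (wext (Fin.append ω γ)) z ≤
        S.normDw 0 (n + q) (wext (Fin.append ω γ)) := S.le_normDw hmemτ hBDP hz
    rw [hdecomp ω γ hγ z hz] at h1
    have h2 : W ≤ K * S.Dw 0 n (wext ω) (S.comp n q (wext γ) z) :=
      S.normDw_le hω hBDP hy
    have h3 : 0 < S.Dw n q (wext γ) z := S.Dw_pos n (hadm_tail γ hγ) hz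
    rw [div_mul_eq_mul_div, le_div_iff₀ hWpos]
    calc S.Dw n q (wext γ) z * W
        ≤ S.Dw n q (wext γ) z *
            (K * S.Dw 0 n (wext ω) (S.comp n q (wext γ) z)) :=
          mul_le_mul_of_nonneg_left h2 h3.le
      _ = K * (S.Dw 0 n (wext ω) (S.comp n q (wext γ) z) *
            S.Dw n q (wext γ) z) := by ring
      _ ≤ K * S.normDw 0 (n + q) (wext (Fin.append ω γ)) :=
          mul_le_mul_of_nonneg_left h1 hK0.le
  -- key comparison between cylinders over different prefixes
  have hkey : ∀ γ ∈ S.words n q, ∀ ω' ∈ S.words 0 n,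
      S.normDw 0 (n + q) (wext (Fin.append ω' γ)) ≤
        K / W * S.normDw 0 n (wext ω') *
          S.normDw 0 (n + q) (wext (Fin.append ω γ)) := by
    intro γ hγ ω' hω'
    have hNω' : 0 < S.normDw 0 n (wext ω') := S.normDw_pos hω' hBDP
    have hNτ : 0 < S.normDw 0 (n + q) (wext (Fin.append ω γ)) :=
      S.normDw_pos (S.append_mem_words hω hγ) hBDP
    apply Real.sSup_le
    · rintro r ⟨z, hz, rfl⟩
      rw [hdecomp ω' γ hγ z hz]
      have hy : S.comp n q (wext γ) z ∈ S.X := S.comp_mapsTo n (hadm_tail γ hγ) hz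
      have h1 : S.Dw 0 n (wext ω') (S.comp n q (wext γ) z) ≤
          S.normDw 0 n (wext ω') := S.le_normDw hω' hBDP hy
      have h2 := htailbd γ hγ z hz
      have h3 : 0 < S.Dw n q (wext γ) z := S.Dw_pos n (hadm_tail γ hγ) hz
      have h4 : 0 < S.Dw 0 n (wext ω') (S.comp n q (wext γ) z) :=
        S.Dw_pos 0 (S.wext_adm hω') hy
      calc S.Dw 0 n (wext ω') (S.comp n q (wext γ) z) * S.Dw n q (wext γ) z
          ≤ S.normDw 0 n (wext ω') *
              (K / W * S.normDw 0 (n + q) (wext (Fin.append ω γ))) :=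
            mul_le_mul h1 h2 h3.le hNω'.le
        _ = K / W * S.normDw 0 n (wext ω') *
              S.normDw 0 (n + q) (wext (Fin.append ω γ)) := by ring
    · positivity
  -- positivity of partition sums
  have hZn_pos : 0 < S.Z n h :=
    Finset.sum_pos (fun ω' hω' => Real.rpow_pos_of_pos (S.normDw_pos hω' hBDP) h)
      (S.words_nonempty 0 n)
  have hZq_pos : 0 < S.Z (n + q) h :=
    Finset.sum_pos (fun τ hτ => Real.rpow_pos_of_pos (S.normDw_pos hτ hBDP) h)
      (S.words_nonempty 0 (n + q))
  set Sg := ∑ γ ∈ S.words n q, (S.normDw 0 (n + q) (wext (Fin.append ω γ))) ^ h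
    with hSgdef
  have hSg_pos : 0 < Sg :=
    Finset.sum_pos
      (fun γ hγ =>
        Real.rpow_pos_of_pos (S.normDw_pos (S.append_mem_words hω hγ) hBDP) h)
      (S.words_nonempty n q)
  -- split Z_{n+q} as a double sum
  have hZq_eq : S.Z (n + q) h = ∑ ω' ∈ S.words 0 n, ∑ γ ∈ S.words n q,
      (S.normDw 0 (n + q) (wext (Fin.append ω' γ))) ^ h := by
    rw [NCIFS.Z, ← Finset.sum_product']
    refine Finset.sum_nbij'
      (i := fun τ => (fun k => τ (Fin.castAdd q k), fun k => τ (Fin.natAdd n k)))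
      (j := fun p => Fin.append p.1 p.2) ?_ ?_ ?_ ?_ ?_
    · intro τ hτ
      rw [NCIFS.words, Fintype.mem_piFinset] at hτ
      rw [Finset.mem_product]
      constructor
      · rw [NCIFS.words, Fintype.mem_piFinset]
        intro k
        simpa using hτ (Fin.castAdd q k)
      · rw [NCIFS.words, Fintype.mem_piFinset]
        intro k
        have := hτ (Fin.natAdd n k)
        simpa [Nat.zero_add] using this
    · intro p hp
      rw [Finset.mem_product] at hp
      exact S.append_mem_words hp.1 hp.2
    · intro τ hτ
      exact Fin.append_castAdd_natAdd
    · intro p hp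
      ext1
      · funext k
        simp [Fin.append_left]
      · funext k
        simp [Fin.append_right]
    · intro τ hτ
      rw [Fin.append_castAdd_natAdd]
  -- combine into a bound on Z_{n+q}
  have hZq_le : S.Z (n + q) h ≤ (K / W) ^ h * S.Z n h * Sg := by
    rw [hZq_eq]
    have hterm : ∀ ω' ∈ S.words 0 n, ∀ γ ∈ S.words n q,
        (S.normDw 0 (n + q) (wext (Fin.append ω' γ))) ^ h ≤
          (K / W) ^ h * (S.normDw 0 n (wext ω')) ^ h *
            (S.normDw 0 (n + q) (wext (Fin.append ω γ))) ^ h := by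
      intro ω' hω' γ hγ
      have h0 : 0 ≤ S.normDw 0 (n + q) (wext (Fin.append ω' γ)) :=
        (S.normDw_pos (S.append_mem_words hω' hγ) hBDP).le
      have hNω' : 0 ≤ S.normDw 0 n (wext ω') := (S.normDw_pos hω' hBDP).le
      have hNτ : 0 ≤ S.normDw 0 (n + q) (wext (Fin.append ω γ)) :=
        (S.normDw_pos (S.append_mem_words hω hγ) hBDP).le
      calc (S.normDw 0 (n + q) (wext (Fin.append ω' γ))) ^ h
          ≤ (K / W * S.normDw 0 n (wext ω') *
              S.normDw 0 (n + q) (wext (Fin.append ω γ))) ^ h :=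
            Real.rpow_le_rpow h0 (hkey γ hγ ω' hω') hh.le
        _ = (K / W) ^ h * (S.normDw 0 n (wext ω')) ^ h *
              (S.normDw 0 (n + q) (wext (Fin.append ω γ))) ^ h := by
            rw [Real.mul_rpow (by positivity) hNτ, Real.mul_rpow (by positivity) hNω']
    calc ∑ ω' ∈ S.words 0 n, ∑ γ ∈ S.words n q,
          (S.normDw 0 (n + q) (wext (Fin.append ω' γ))) ^ h
        ≤ ∑ ω' ∈ S.words 0 n, ∑ γ ∈ S.words n q,
            (K / W) ^ h * (S.normDw 0 n (wext ω')) ^ h *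
              (S.normDw 0 (n + q) (wext (Fin.append ω γ))) ^ h :=
          Finset.sum_le_sum fun ω' hω' =>
            Finset.sum_le_sum fun γ hγ => hterm ω' hω' γ hγ
      _ = (K / W) ^ h * S.Z n h * Sg := by
          rw [NCIFS.Z, hSgdef]
          conv_rhs => rw [mul_assoc, Finset.sum_mul_sum, Finset.mul_sum]
          refine Finset.sum_congr rfl fun ω' _ => ?_
          rw [Finset.mul_sum]
          exact Finset.sum_congr rfl fun γ _ => by ring
  -- the real-number inequality
  have hreal : K ^ (-h) * (S.Z n h)⁻¹ * W ^ h ≤ Sg / S.Z (n + q) h := by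
    rw [le_div_iff₀ hZq_pos]
    have hKh : (0 : ℝ) < K ^ h := Real.rpow_pos_of_pos hK0 h
    have hWh : (0 : ℝ) < W ^ h := Real.rpow_pos_of_pos hWpos h
    have hKnh : (0 : ℝ) ≤ K ^ (-h) := (Real.rpow_pos_of_pos hK0 (-h)).le
    calc K ^ (-h) * (S.Z n h)⁻¹ * W ^ h * S.Z (n + q) h
        ≤ K ^ (-h) * (S.Z n h)⁻¹ * W ^ h * ((K / W) ^ h * S.Z n h * Sg) := by
          apply mul_le_mul_of_nonneg_left hZq_le
          have := inv_nonneg.mpr hZn_pos.le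
          positivity
      _ = Sg := by
          rw [Real.div_rpow hK0.le hWpos.le, Real.rpow_neg hK0.le]
          field_simp
  -- measure-theoretic part
  have hAmeas : ∀ τ ∈ S.words 0 (n + q),
      MeasurableSet (S.comp 0 (n + q) (wext τ) '' S.X) := by
    intro τ hτ
    have hc : ContinuousOn (S.comp 0 (n + q) (wext τ)) S.X :=
      (S.comp_continuousOn 0 (S.wext_adm hτ)).mono S.XsubV
    exact (S.compactX.image_of_continuousOn hc).isClosed.measurableSet
  have hsub : ∀ γ ∈ S.words n q,
      S.comp 0 (n + q) (wext (Fin.append ω γ)) '' S.X ⊆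
        S.comp 0 n (wext ω) '' S.X := by
    intro γ hγ x hx
    obtain ⟨z, hz, rfl⟩ := hx
    have hca := S.comp_add 0 n q (wext (Fin.append ω γ))
    rw [Nat.zero_add] at hca
    rw [hca]
    have hy : S.comp n q (fun j => wext (Fin.append ω γ) (n + j)) z ∈ S.X := by
      rw [S.comp_congr n (htail_eq ω γ)]
      exact S.comp_mapsTo n (hadm_tail γ hγ) hz
    refine ⟨_, hy, ?_⟩
    rw [S.comp_congr 0 (fun j hj => (NCIFS.wext_append_lt ω γ hj).symm)]
    rfl
  have hdisj : (↑(S.words n q) : Set (Fin q → E)).Pairwise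
      (Function.onFun (AEDisjoint μ) fun γ => S.comp 0 (n + q) (wext (Fin.append ω γ)) '' S.X) := by
    intro γ hγ γ' hγ' hne
    have hne' : Fin.append ω γ ≠ Fin.append ω γ' := by
      intro hcontra
      apply hne
      funext k
      have := congrFun hcontra (Fin.natAdd n k)
      rwa [Fin.append_right, Fin.append_right] at this
    exact hnull _ (S.append_mem_words hω (Finset.mem_coe.mp hγ)) _
      (S.append_mem_words hω (Finset.mem_coe.mp hγ')) hne'
  have hsum : μ (⋃ γ ∈ S.words n q,
        S.comp 0 (n + q) (wext (Fin.append ω γ)) '' S.X) =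
      ∑ γ ∈ S.words n q, μ (S.comp 0 (n + q) (wext (Fin.append ω γ)) '' S.X) :=
    measure_biUnion_finset₀ hdisj
      (fun γ hγ => (hAmeas _ (S.append_mem_words hω hγ)).nullMeasurableSet)
  calc ENNReal.ofReal (K ^ (-h) * (S.Z n h)⁻¹ * W ^ h)
      ≤ ENNReal.ofReal (Sg / S.Z (n + q) h) := ENNReal.ofReal_le_ofReal hreal
    _ = ∑ γ ∈ S.words n q, ENNReal.ofReal
          ((S.normDw 0 (n + q) (wext (Fin.append ω γ))) ^ h / S.Z (n + q) h) := by
        rw [hSgdef, Finset.sum_div, ENNReal.ofReal_sum_of_nonneg]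
        intro γ hγ
        exact div_nonneg
          (Real.rpow_nonneg (S.normDw_pos (S.append_mem_words hω hγ) hBDP).le h)
          hZq_pos.le
    _ = ∑ γ ∈ S.words n q, μ (S.comp 0 (n + q) (wext (Fin.append ω γ)) '' S.X) :=
        Finset.sum_congr rfl fun γ hγ =>
          (hval _ (S.append_mem_words hω hγ)).symm
    _ = μ (⋃ γ ∈ S.words n q,
          S.comp 0 (n + q) (wext (Fin.append ω γ)) '' S.X) := hsum.symm
    _ ≤ μ (S.comp 0 n (wext ω) '' S.X) :=
        measure_mono (Set.iUnion₂_subset hsub)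
end
end
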